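/- Let m be a positive integer and let s > 1 be a real number. If (k₁, …, k_m) ∈ Δ(m), i.e., k₁ + 2k₂ + ⋯ + m·k_m = m with each kℓ a nonnegative integer, and k := k₁ + ⋯ + k_m, then (k!)^s · ∏_{ℓ=1}^{m} (ℓ!)^{(s−1)·kℓ} ≤ k! · (m!)^{s−1}, where factorials are raised to real powers. -/
import Mathlib

lemma aux1 (a b : ℕ) (ha : 1 ≤ a) :
    (b+1) * a.factorial * b.factorial ≤ (a+b).factorial := by
  obtain ⟨a, rfl⟩ := Nat.exists_eq_add_of_le ha
  induction a with
  | zero =>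
      simp only [Nat.add_zero, Nat.factorial_one, Nat.mul_one]
      rw [Nat.add_comm 1 b]
      exact (Nat.factorial_succ b).ge
  | succ a ih =>
      have h1 : (b+1) * (1+(a+1)).factorial * b.factorial
          = (a+2) * ((b+1) * (1+a).factorial * b.factorial) := by
        rw [show 1+(a+1) = (1+a)+1 by ring, Nat.factorial_succ]; ring
      calc (b+1) * (1+(a+1)).factorial * b.factorial
          = (a+2) * ((b+1) * (1+a).factorial * b.factorial) := h1
        _ ≤ (a+2) * (1+a+b).factorial := Nat.mul_le_mul_left _ (ih (by omega))
        _ ≤ (1+a+b+1) * (1+a+b).factorial := Nat.mul_le_mul_right _ (by omega)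
        _ = (1+(a+1)+b).factorial := by
            rw [show 1+(a+1)+b = (1+a+b)+1 by ring, Nat.factorial_succ]

lemma aux2 : ∀ L : List ℕ, (∀ a ∈ L, 1 ≤ a) →
    L.length ≤ L.sum ∧
      L.length.factorial * (L.map Nat.factorial).prod ≤ L.sum.factorial := by
  intro L
  induction L with
  | nil => simp
  | cons a L ih =>
      intro h
      have ha : 1 ≤ a := h a (by simp)
      obtain ⟨h1, h2⟩ := ih (fun x hx => h x (by simp [hx]))
      constructor
      · simp; omega
      · simp only [List.length_cons, List.map_cons, List.prod_cons, List.sum_cons,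
          Nat.factorial_succ]
        calc (L.length + 1) * L.length.factorial * (a.factorial * (L.map Nat.factorial).prod)
            = a.factorial * ((L.length+1) * (L.length.factorial * (L.map Nat.factorial).prod)) := by ring
          _ ≤ a.factorial * ((L.sum + 1) * L.sum.factorial) :=
              Nat.mul_le_mul_left _ (Nat.mul_le_mul (by omega) h2)
          _ = (L.sum + 1) * a.factorial * L.sum.factorial := by ring
          _ ≤ (a + L.sum).factorial := aux1 a L.sum ha



lemma aux3 (m : ℕ) (kv : Fin m → ℕ) :
    (∑ ℓ : Fin m, kv ℓ).factorial * ∏ ℓ : Fin m, ((ℓ.1+1).factorial)^(kv ℓ)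
      ≤ (∑ ℓ : Fin m, (ℓ.1+1) * kv ℓ).factorial := by
  set L : List ℕ := (List.finRange m).flatMap fun ℓ => List.replicate (kv ℓ) (ℓ.1+1) with hL
  have hmem : ∀ a ∈ L, 1 ≤ a := by
    intro a ha
    simp only [hL, List.mem_flatMap, List.mem_replicate] at ha
    obtain ⟨ℓ, _, _, rfl⟩ := ha
    omega
  have hlen : L.length = ∑ ℓ : Fin m, kv ℓ := by
    simp [hL, List.length_flatMap, Function.comp_def, List.length_replicate,
      ← List.sum_ofFn, List.ofFn_eq_map]
  have hsum : L.sum = ∑ ℓ : Fin m, (ℓ.1+1) * kv ℓ := by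
    simp [hL, List.flatMap, List.sum_flatten, List.map_map, List.sum_replicate, Function.comp_def, smul_eq_mul,
      ← List.sum_ofFn, List.ofFn_eq_map, Nat.mul_comm]
  have hprod : (L.map Nat.factorial).prod = ∏ ℓ : Fin m, ((ℓ.1+1).factorial)^(kv ℓ) := by
    simp [hL, List.map_flatMap, List.map_replicate, List.flatMap, List.prod_flatten, List.map_map, List.prod_replicate, Function.comp_def,
      ← List.prod_ofFn, List.ofFn_eq_map]
  have := (aux2 L hmem).2
  rwa [hlen, hsum, hprod] at this



/-- Lemma 3.2 ("lema_estimativa_produtorio_vzs_fatorial"):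
If `(k₁, …, k_m) ∈ Δ(m)`, i.e. `k₁ + 2k₂ + ⋯ + m·k_m = m`, and `k = k₁ + ⋯ + k_m`, then
`(k!)^s · ∏_{ℓ=1}^m (ℓ!)^{(s-1)kℓ} ≤ k! · (m!)^{s-1}`. -/
theorem stmt_0 (m : ℕ) (hm : 0 < m) (s : ℝ) (hs : 1 < s)
    (kv : Fin m → ℕ) (hΔ : ∑ ℓ : Fin m, (ℓ.1 + 1) * kv ℓ = m) :
    ((Nat.factorial (∑ ℓ : Fin m, kv ℓ) : ℝ)) ^ s *
      ∏ ℓ : Fin m, ((Nat.factorial (ℓ.1 + 1) : ℝ)) ^ ((s - 1) * (kv ℓ : ℝ)) ≤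
    (Nat.factorial (∑ ℓ : Fin m, kv ℓ) : ℝ) * (Nat.factorial m : ℝ) ^ (s - 1) := by
  set k := ∑ ℓ : Fin m, kv ℓ with hk
  have hnat : k.factorial * ∏ ℓ : Fin m, ((ℓ.1+1).factorial)^(kv ℓ) ≤ m.factorial := by
    have := aux3 m kv
    rwa [hΔ] at this
  have hkpos : (0:ℝ) < (k.factorial : ℝ) := by exact_mod_cast k.factorial_pos
  have h1 : ((k.factorial : ℝ)) ^ s = (k.factorial : ℝ) * (k.factorial : ℝ) ^ (s-1) := by
    rw [show s = 1 + (s-1) by ring, Real.rpow_add hkpos, Real.rpow_one]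
    ring_nf
  have h2 : ∀ ℓ : Fin m, ((Nat.factorial (ℓ.1 + 1) : ℝ)) ^ ((s - 1) * (kv ℓ : ℝ))
      = (((Nat.factorial (ℓ.1 + 1) : ℝ)) ^ (kv ℓ)) ^ (s-1) := by
    intro ℓ
    rw [mul_comm, Real.rpow_mul (by positivity), Real.rpow_natCast]
  calc ((k.factorial : ℝ)) ^ s * ∏ ℓ : Fin m, ((Nat.factorial (ℓ.1 + 1) : ℝ)) ^ ((s - 1) * (kv ℓ : ℝ))
      = (k.factorial : ℝ) * ((k.factorial : ℝ) ^ (s-1) *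
          ∏ ℓ : Fin m, (((Nat.factorial (ℓ.1 + 1) : ℝ)) ^ (kv ℓ)) ^ (s-1)) := by
        rw [h1, Finset.prod_congr rfl (fun ℓ _ => h2 ℓ)]
        ring
    _ = (k.factorial : ℝ) * (((k.factorial : ℝ) *
          ∏ ℓ : Fin m, ((Nat.factorial (ℓ.1 + 1) : ℝ)) ^ (kv ℓ)) ^ (s-1)) := by
        rw [Real.finset_prod_rpow _ _ (fun ℓ _ => by positivity),
          ← Real.mul_rpow (by positivity) (by positivity)]
    _ ≤ (k.factorial : ℝ) * (m.factorial : ℝ) ^ (s-1) := by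
        apply mul_le_mul_of_nonneg_left _ (le_of_lt hkpos)
        apply Real.rpow_le_rpow (by positivity) _ (by linarith)
        exact_mod_cast hnat
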